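/- If every vertex of a graph G of order n belongs to a triangle, then γ(G) ≤ n/3. -/
import Mathlib


open Finset

variable {V : Type*}

/-- A finset is independent in `G` : no two of its vertices are adjacent. -/
def IsIndepFinset (G : SimpleGraph V) (S : Finset V) : Prop :=
  ∀ u ∈ S, ∀ v ∈ S, ¬ G.Adj u v

/-- A finset dominates `G` : every vertex outside it has a neighbour inside it. -/
def IsDomFinset (G : SimpleGraph V) (D : Finset V) : Prop :=
  ∀ v, v ∉ D → ∃ u ∈ D, G.Adj u v

/-- The independence number of `G`. -/
noncomputable def indepNum [Fintype V] (G : SimpleGraph V) : ℕ :=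
  sSup {n | ∃ S : Finset V, IsIndepFinset G S ∧ S.card = n}

/-- The domination number of `G`. -/
noncomputable def domNum [Fintype V] (G : SimpleGraph V) : ℕ :=
  sInf {n | ∃ D : Finset V, IsDomFinset G D ∧ D.card = n}

/-- `G` is `K_{1,r}`-free: no vertex has `r` pairwise nonadjacent neighbours. -/
def K1rFree (G : SimpleGraph V) (r : ℕ) : Prop :=
  ¬ ∃ (v : V) (A : Finset V), (∀ a ∈ A, G.Adj v a) ∧
      (∀ a ∈ A, ∀ b ∈ A, a ≠ b → ¬ G.Adj a b) ∧ A.card = r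

/-- `v` is "dependent" on the set `C`: `v ∉ C` and every triangle through `v`
meets `C`. -/
def Dep (G : SimpleGraph V) (C : Set V) (v : V) : Prop :=
  v ∉ C ∧ ∀ a b : V, G.Adj v a → G.Adj v b → G.Adj a b → (a ∈ C ∨ b ∈ C)

/-- Key structural lemma: if every vertex lies in a triangle, there is a vertex `c`
and a "safe star" `S` (with `c ∈ S`, `|S| ≥ 3`, `S ⊆ N[c]`) whose removal leaves
every remaining vertex in a triangle. -/
theorem safe_star [Fintype V] (G : SimpleGraph V)
    (htri : ∀ v : V, ∃ a b : V, G.Adj v a ∧ G.Adj v b ∧ G.Adj a b) (v₀ : V) :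
    ∃ (c : V) (S : Finset V), c ∈ S ∧ 3 ≤ S.card ∧
      (∀ v ∈ S, v = c ∨ G.Adj c v) ∧
      (∀ v : V, v ∉ S →
        ∃ a b : V, G.Adj v a ∧ G.Adj v b ∧ G.Adj a b ∧ a ∉ S ∧ b ∉ S) := by
  classical
  by_contra hno
  -- helper: exhibiting a suitable (c, C) pair with three distinct elements
  -- contradicts `hno`.
  have works : ∀ (c : V) (C : Set V), c ∈ C →
      (∀ w, w ∈ C → w = c ∨ G.Adj c w) →
      (∀ v, Dep G C v → G.Adj c v) →
      ∀ u₁ u₂ u₃ : V, u₁ ≠ u₂ → u₁ ≠ u₃ → u₂ ≠ u₃ →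
      (u₁ ∈ C ∨ Dep G C u₁) → (u₂ ∈ C ∨ Dep G C u₂) → (u₃ ∈ C ∨ Dep G C u₃) →
      False := by
    intro c C hcC hCadj hdep u₁ u₂ u₃ h12 h13 h23 hu₁ hu₂ hu₃
    set S : Finset V := (Set.toFinite (C ∪ {v | Dep G C v})).toFinset with hSdef
    have hmem : ∀ x : V, x ∈ S ↔ (x ∈ C ∨ Dep G C x) := by
      intro x
      simp only [hSdef, Set.Finite.mem_toFinset, Set.mem_union, Set.mem_setOf_eq]
    apply hno
    refine ⟨c, S, (hmem c).2 (Or.inl hcC), ?_, ?_, ?_⟩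
    · -- card
      have hsub : ({u₁, u₂, u₃} : Finset V) ⊆ S := by
        intro x hx
        rcases Finset.mem_insert.1 hx with h | hx'
        · exact (hmem x).2 (h ▸ hu₁)
        rcases Finset.mem_insert.1 hx' with h | hx''
        · exact (hmem x).2 (h ▸ hu₂)
        · exact (hmem x).2 ((Finset.mem_singleton.1 hx'') ▸ hu₃)
      have hcard : ({u₁, u₂, u₃} : Finset V).card = 3 := by
        rw [Finset.card_insert_of_notMem (by simp [h12, h13]),
          Finset.card_insert_of_notMem (by simp [h23]), Finset.card_singleton]
      calc (3 : ℕ) = ({u₁, u₂, u₃} : Finset V).card := hcard.symm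
        _ ≤ S.card := Finset.card_le_card hsub
    · -- star property
      intro v hvS
      rcases (hmem v).1 hvS with hvC | hvdep
      · exact hCadj v hvC
      · exact Or.inr (hdep v hvdep)
    · -- safety
      intro v hvS
      have hv : ¬ (v ∈ C ∨ Dep G C v) := fun h => hvS ((hmem v).2 h)
      have hvC : v ∉ C := fun h => hv (Or.inl h)
      have hnot : ¬ ∀ a b : V, G.Adj v a → G.Adj v b → G.Adj a b →
          (a ∈ C ∨ b ∈ C) := fun hall => hv (Or.inr ⟨hvC, hall⟩)
      push_neg at hnot
      obtain ⟨a, b, h1, h2, h3, hab⟩ := hnot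
      have haC : a ∉ C := hab.1
      have hbC : b ∉ C := hab.2
      have haS : a ∉ S := by
        rw [hmem]
        rintro (h | ⟨-, hall⟩)
        · exact haC h
        · rcases hall v b h1.symm h3 h2 with h | h
          · exact hvC h
          · exact hbC h
      have hbS : b ∉ S := by
        rw [hmem]
        rintro (h | ⟨-, hall⟩)
        · exact hbC h
        · rcases hall v a h2.symm h3.symm h1 with h | h
          · exact hvC h
          · exact haC h
      exact ⟨a, b, h1, h2, h3, haS, hbS⟩
  -- dependence on a single vertex implies adjacency to it
  have dep_adj : ∀ c v : V, Dep G {c} v → G.Adj c v := by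
    intro c v ⟨hvc, hall⟩
    obtain ⟨a, b, h1, h2, h3⟩ := htri v
    rcases hall a b h1 h2 h3 with h | h
    · rw [Set.mem_singleton_iff] at h; exact (h ▸ h1).symm
    · rw [Set.mem_singleton_iff] at h; exact (h ▸ h2).symm
  -- step (1): at most one vertex depends on any given vertex
  have dep_unique : ∀ c v w : V, Dep G {c} v → Dep G {c} w → v = w := by
    intro c v w hv hw
    by_contra hvw
    have hvc : v ≠ c := fun h => hv.1 (h ▸ rfl)
    have hwc : w ≠ c := fun h => hw.1 (h ▸ rfl)
    exact works c {c} rfl (fun x hx => Or.inl hx)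
      (fun u hu => dep_adj c u hu) c v w (Ne.symm hvc) (Ne.symm hwc) hvw
      (Or.inl rfl) (Or.inr hv) (Or.inr hw)
  -- step (2): a pair-dependent vertex not adjacent to `p` depends on `q`
  have dep_pair : ∀ p q v : V, Dep G {p, q} v → ¬ G.Adj v p → Dep G {q} v := by
    intro p q v ⟨hvC, hall⟩ hnadj
    constructor
    · intro h
      exact hvC (Set.mem_insert_iff.2 (Or.inr h))
    · intro a b h1 h2 h3
      rcases hall a b h1 h2 h3 with h | h
      · rcases Set.mem_insert_iff.1 h with h' | h'
        · exact absurd (h' ▸ h1) hnadj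
        · exact Or.inl h'
      · rcases Set.mem_insert_iff.1 h with h' | h'
        · exact absurd (h' ▸ h2) hnadj
        · exact Or.inr h'
  -- step (3): witnesses along an edge whose pair-dependence set is nonempty
  have edge_wit : ∀ p q v₁ : V, G.Adj p q → Dep G {p, q} v₁ →
      ∃ w : V, Dep G {p, q} w ∧ ¬ G.Adj w p := by
    intro p q v₁ hpq hv₁
    by_contra h
    push_neg at h
    have hv₁p : v₁ ≠ p := fun hh => hv₁.1 (hh ▸ Set.mem_insert _ _)
    have hv₁q : v₁ ≠ q := fun hh =>
      hv₁.1 (Set.mem_insert_iff.2 (Or.inr hh))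
    refine works p {p, q} (Set.mem_insert _ _) ?_
      (fun v hv => (h v hv).symm) p q v₁ hpq.ne (Ne.symm hv₁p) (Ne.symm hv₁q)
      (Or.inl (Set.mem_insert _ _))
      (Or.inl (Set.mem_insert_iff.2 (Or.inr rfl))) (Or.inr hv₁)
    intro w hw
    rcases Set.mem_insert_iff.1 hw with h' | h'
    · exact Or.inl h'
    · exact Or.inr (h' ▸ hpq)
  -- a corner of a triangle fails to be a universal star centre
  have corner_wit : ∀ x y z : V, G.Adj x y → G.Adj x z → G.Adj y z →
      ∃ v : V, Dep G {x, y, z} v ∧ ¬ G.Adj x v := by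
    intro x y z hxy hxz hyz
    by_contra h
    push_neg at h
    refine works x {x, y, z} (Set.mem_insert _ _) ?_ h x y z hxy.ne hxz.ne hyz.ne
      (Or.inl (Set.mem_insert _ _))
      (Or.inl (by simp)) (Or.inl (by simp))
    intro w hw
    rcases Set.mem_insert_iff.1 hw with h' | h'
    · exact Or.inl h'
    rcases Set.mem_insert_iff.1 h' with h'' | h''
    · exact Or.inr (h'' ▸ hxy)
    · rw [Set.mem_singleton_iff] at h''
      exact Or.inr (h'' ▸ hxz)
  -- a corner witness pair-depends on the opposite edge
  have corner_pair : ∀ x y z v : V, Dep G {x, y, z} v → ¬ G.Adj x v →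
      Dep G {y, z} v := by
    intro x y z v ⟨hvC, hall⟩ hnadj
    constructor
    · intro h
      exact hvC (Set.mem_insert_iff.2 (Or.inr h))
    · intro a b h1 h2 h3
      rcases hall a b h1 h2 h3 with h | h
      · rcases Set.mem_insert_iff.1 h with h' | h'
        · exact absurd (h' ▸ h1).symm hnadj
        · exact Or.inl h'
      · rcases Set.mem_insert_iff.1 h with h' | h'
        · exact absurd (h' ▸ h2).symm hnadj
        · exact Or.inr h'
  -- step (4): for every triangle, the corner has a unique dependent vertex
  -- which is adjacent to no other corner
  have tri_dep : ∀ x y z : V, G.Adj x y → G.Adj x z → G.Adj y z →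
      ∃ α : V, Dep G {x} α ∧ ¬ G.Adj α y ∧ ¬ G.Adj α z := by
    intro x y z hxy hxz hyz
    -- corner y gives a nonempty Dep {x, z}
    obtain ⟨vy, hvy, hvyn⟩ := corner_wit y x z hxy.symm hyz hxz
    have hvy' : Dep G {x, z} vy := corner_pair y x z vy hvy hvyn
    -- corner z gives a nonempty Dep {x, y}
    obtain ⟨vz, hvz, hvzn⟩ := corner_wit z x y hxz.symm hyz.symm hxy
    have hvz' : Dep G {x, y} vz := corner_pair z x y vz hvz hvzn
    -- edge x y : get w₁ with Dep {x} w₁ and ¬ Adj w₁ y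
    have hxypair : Dep G {y, x} vz := by
      rwa [Set.pair_comm y x]
    obtain ⟨w₁, hw₁, hw₁n⟩ := edge_wit y x vz hxy.symm hxypair
    have hw₁x : Dep G {x} w₁ := dep_pair y x w₁ hw₁ hw₁n
    -- edge x z : get w₂ with Dep {x} w₂ and ¬ Adj w₂ z
    have hxzpair : Dep G {z, x} vy := by
      rwa [Set.pair_comm z x]
    obtain ⟨w₂, hw₂, hw₂n⟩ := edge_wit z x vy hxz.symm hxzpair
    have hw₂x : Dep G {x} w₂ := dep_pair z x w₂ hw₂ hw₂n
    have hww : w₁ = w₂ := dep_unique x w₁ w₂ hw₁x hw₂x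
    exact ⟨w₁, hw₁x, hw₁n, fun h => hw₂n (hww ▸ h)⟩
  -- step (5): derive the contradiction
  obtain ⟨a₀, b₀, h1, h2, h3⟩ := htri v₀
  obtain ⟨α, hα, hαa, hαb⟩ := tri_dep v₀ a₀ b₀ h1 h2 h3
  have hαv₀ : G.Adj v₀ α := dep_adj v₀ α hα
  obtain ⟨s, t, hs1, hs2, hs3⟩ := htri α
  rcases hα.2 s t hs1 hs2 hs3 with hs | ht
  · rw [Set.mem_singleton_iff] at hs
    -- triangle (v₀, α, t)
    have hv₀t : G.Adj v₀ t := by rw [← hs]; exact hs3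
    obtain ⟨α', hα', hn1, hn2⟩ := tri_dep v₀ α t hαv₀ hv₀t hs2
    have heq : α' = α := dep_unique v₀ α' α hα' hα
    rw [heq] at hn2
    exact hn2 hs2
  · rw [Set.mem_singleton_iff] at ht
    -- triangle (v₀, α, s)
    have hv₀s : G.Adj v₀ s := by rw [← ht]; exact hs3.symm
    obtain ⟨α', hα', hn1, hn2⟩ := tri_dep v₀ α s hαv₀ hv₀s hs1
    have heq : α' = α := dep_unique v₀ α' α hα' hα
    rw [heq] at hn2
    exact hn2 hs1

/-- Strong induction: every graph whose vertices all lie in triangles has a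
dominating set of size at most a third of the order. -/
theorem dom_third : ∀ (n : ℕ) (W : Type*) [Fintype W] (G : SimpleGraph W),
    (∀ v : W, ∃ a b : W, G.Adj v a ∧ G.Adj v b ∧ G.Adj a b) →
    Fintype.card W ≤ n →
    ∃ D : Finset W, (∀ v, v ∉ D → ∃ u ∈ D, G.Adj u v) ∧
      3 * D.card ≤ Fintype.card W := by
  intro n
  induction n with
  | zero =>
    intro W _ G htri hcard
    refine ⟨∅, fun v _ => ?_, by simp⟩
    have : IsEmpty W := Fintype.card_eq_zero_iff.1 (Nat.le_zero.1 hcard)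
    exact this.false v |>.elim
  | succ n ih =>
    intro W _ G htri hcard
    classical
    by_cases hW : Nonempty W
    · obtain ⟨v₀⟩ := hW
      obtain ⟨c, S, hcS, hS3, hSadj, hSsafe⟩ := safe_star G htri v₀
      -- the complement subtype
      let G' : SimpleGraph {v : W // v ∈ Sᶜ} := G.comap (Subtype.val)
      have htri' : ∀ v : {v : W // v ∈ Sᶜ}, ∃ a b : {v : W // v ∈ Sᶜ},
          G'.Adj v a ∧ G'.Adj v b ∧ G'.Adj a b := by
        rintro ⟨v, hv⟩
        obtain ⟨a, b, h1, h2, h3, ha, hb⟩ :=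
          hSsafe v (Finset.mem_compl.1 hv)
        exact ⟨⟨a, Finset.mem_compl.2 ha⟩, ⟨b, Finset.mem_compl.2 hb⟩,
          h1, h2, h3⟩
      have hcard' : Fintype.card {v : W // v ∈ Sᶜ} ≤ n := by
        have h1 : Fintype.card {v : W // v ∈ Sᶜ} = (Sᶜ : Finset W).card :=
          Fintype.card_coe _
        have h2 : (Sᶜ : Finset W).card = Fintype.card W - S.card :=
          Finset.card_compl S
        omega
      obtain ⟨D', hdom', hcard3⟩ := ih {v : W // v ∈ Sᶜ} G' htri' hcard'
      refine ⟨insert c (D'.map ⟨Subtype.val, Subtype.val_injective⟩),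
        ?_, ?_⟩
      · intro v hv
        by_cases hvS : v ∈ S
        · have hvc : v ≠ c := fun h => hv (Finset.mem_insert.2 (Or.inl h))
          rcases hSadj v hvS with h | h
          · exact absurd h hvc
          · exact ⟨c, Finset.mem_insert_self c _, h⟩
        · have hv' : (⟨v, Finset.mem_compl.2 hvS⟩ : {v : W // v ∈ Sᶜ}) ∉ D' := by
            intro hmem
            apply hv
            refine Finset.mem_insert.2 (Or.inr ?_)
            exact Finset.mem_map.2 ⟨_, hmem, rfl⟩
          obtain ⟨u, huD, hadj⟩ := hdom' _ hv'
          exact ⟨u.val, Finset.mem_insert.2 (Or.inr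
            (Finset.mem_map.2 ⟨u, huD, rfl⟩)), hadj⟩
      · have hc1 : (insert c (D'.map ⟨Subtype.val, Subtype.val_injective⟩)).card
            ≤ D'.card + 1 := by
          calc (insert c (D'.map ⟨Subtype.val, Subtype.val_injective⟩)).card
              ≤ (D'.map ⟨Subtype.val, Subtype.val_injective⟩).card + 1 :=
                Finset.card_insert_le _ _
            _ = D'.card + 1 := by rw [Finset.card_map]
        have h1 : Fintype.card {v : W // v ∈ Sᶜ} = Fintype.card W - S.card := by
          rw [Fintype.card_coe, Finset.card_compl]
        have hSle : S.card ≤ Fintype.card W := Finset.card_le_univ S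
        omega
    · refine ⟨∅, fun v _ => ?_, by simp⟩
      exact absurd ⟨v⟩ hW

/-- If every vertex of G belongs to a triangle, then γ(G) ≤ n/3,
i.e. 3·γ(G) ≤ n. -/
theorem stmt11 [Fintype V] (G : SimpleGraph V)
    (htri : ∀ v : V, ∃ a b : V, G.Adj v a ∧ G.Adj v b ∧ G.Adj a b) :
    3 * domNum G ≤ Fintype.card V := by
  obtain ⟨D, hdom, hcard⟩ := dom_third (Fintype.card V) V G htri le_rfl
  have h1 : domNum G ≤ D.card := Nat.sInf_le ⟨D, hdom, rfl⟩
  calc 3 * domNum G ≤ 3 * D.card := Nat.mul_le_mul_left 3 h1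
    _ ≤ Fintype.card V := hcard
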